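/- The always-inactive policy is optimal, i.e. E(s) ≤ 0 = E(M+1) for every s ∈ {1,...,M}, if and only if Σ_{j=1}^{M−1} U(j) ≤ G/p + P − B. -/

import Mathlib

open Finset

/-- Expected average reward `E(s)` of the threshold-`s` policy, for `1 ≤ s ≤ M`;
`E(M+1) = 0` corresponds to the always-inactive policy. -/
noncomputable def Ereward (M : ℕ) (p G P B : ℝ) (U : ℕ → ℝ) (s : ℕ) : ℝ :=
  if s = M + 1 then 0
  else ((s : ℝ) + (1 - p) / p)⁻¹ *
    ((∑ x ∈ Finset.Icc 1 (s - 1), U x)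
      + (∑ i ∈ Finset.range (M - s), U (s + i) * (1 - p) ^ i)
      - G / p - P + B)

/-- The always-inactive policy is optimal, i.e. `E(s) ≤ 0 = E(M+1)` for all
`s ∈ {1,...,M}`, iff `Σ_{j=1}^{M−1} U(j) ≤ G/p + P − B`. -/
theorem always_inactive_optimal_iff (M : ℕ) (p G P B : ℝ) (U : ℕ → ℝ)
    (hM : 2 ≤ M) (hp : 0 < p) (hp1 : p < 1)
    (hU : ∀ ⦃x y : ℕ⦄, 1 ≤ x → x ≤ y → y ≤ M → U y ≤ U x)
    (hUM : U M = 0) :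
    (∀ s ∈ Finset.Icc 1 M, Ereward M p G P B U s ≤ 0) ↔
    (∑ j ∈ Finset.Icc 1 (M - 1), U j) ≤ G / p + P - B := by
  have hq : 0 < (1 - p) / p := div_pos (by linarith) hp
  constructor
  · intro h
    have hMmem : M ∈ Finset.Icc 1 M := by simp; omega
    have hEM := h M hMmem
    rw [Ereward, if_neg (by omega)] at hEM
    rw [Nat.sub_self, Finset.range_zero, Finset.sum_empty] at hEM
    have hc : 0 < ((M : ℝ) + (1 - p) / p) := by
      have : (0:ℝ) ≤ M := Nat.cast_nonneg M
      linarith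
    have hcinv : 0 < ((M : ℝ) + (1 - p) / p)⁻¹ := inv_pos.mpr hc
    by_contra hN
    push_neg at hN
    have hpos : 0 < ((M : ℝ) + (1 - p) / p)⁻¹ *
        ((∑ x ∈ Finset.Icc 1 (M - 1), U x) + 0 - G / p - P + B) :=
      mul_pos hcinv (by linarith)
    linarith
  · intro hsum s hs
    simp only [Finset.mem_Icc] at hs
    obtain ⟨hs1, hs2⟩ := hs
    rw [Ereward, if_neg (by omega)]
    have hc : 0 < ((s : ℝ) + (1 - p) / p) := by
      have : (0:ℝ) ≤ s := Nat.cast_nonneg s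
      linarith
    have hUnn : ∀ x, 1 ≤ x → x ≤ M → 0 ≤ U x := fun x h1 h2 => hUM ▸ hU h1 h2 le_rfl
    have h1 : ∑ i ∈ Finset.range (M - s), U (s + i) * (1 - p) ^ i ≤
        ∑ i ∈ Finset.range (M - s), U (s + i) := by
      apply Finset.sum_le_sum
      intro i hi
      simp only [Finset.mem_range] at hi
      have hU0 : 0 ≤ U (s + i) := hUnn _ (by omega) (by omega)
      have hpow : (1 - p) ^ i ≤ 1 := pow_le_one₀ (by linarith) (by linarith)
      nlinarith
    have h2 : ∑ j ∈ Finset.Ico s M, U j = ∑ i ∈ Finset.range (M - s), U (s + i) :=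
      Finset.sum_Ico_eq_sum_range _ _ _
    have h3 : Finset.Icc 1 (s - 1) = Finset.Ico 1 s := by
      rw [← Finset.Ico_add_one_right_eq_Icc]; congr 1; omega
    have h4 : Finset.Icc 1 (M - 1) = Finset.Ico 1 M := by
      rw [← Finset.Ico_add_one_right_eq_Icc]; congr 1; omega
    have key : (∑ x ∈ Finset.Icc 1 (s - 1), U x)
        + (∑ i ∈ Finset.range (M - s), U (s + i) * (1 - p) ^ i)
        ≤ ∑ j ∈ Finset.Icc 1 (M - 1), U j := by
      rw [h3, h4, ← Finset.sum_Ico_consecutive _ hs1 hs2, h2]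
      exact add_le_add_right h1 _
    have hN : (∑ x ∈ Finset.Icc 1 (s - 1), U x)
        + (∑ i ∈ Finset.range (M - s), U (s + i) * (1 - p) ^ i)
        - G / p - P + B ≤ 0 := by linarith
    exact mul_nonpos_of_nonneg_of_nonpos (inv_pos.mpr hc).le hN
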